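/- (Corollary 1) Under the setup of Theorem 1, let Y₀ = { x ∈ ℝⁿ : Σ_{m=1}^{M} ‖x − y₀^m‖₂ ≤ R and x ≠ y₀^m for all m }, and suppose the hypotheses of Theorem 1 (the discrete contraction property of rollouts and the triangle inequality ℓ(ŷ(x), y^m) ≤ ℓ(ŷ(x), ŷ^m) + ℓ(ŷ^m, y^m) for every m) hold for every x ∈ Y₀. Let μ be any probability measure on ℝⁿ with μ(Y₀) = 1, and suppose the loss function x ↦ L(x) = Σ_{m=1}^{M} λ_m(x) ℓ(ŷ(x), y^m) is μ-integrable. Then the true (expected) loss satisfies ∫ L dμ ≤ max_{m ∈ {1,…,M}} ℓ(ŷ^m, y^m) + α² R² (e^{−2γ} − 1) / (H · M · (e^{−2γ/H} − 1)). -/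

import Mathlib

open MeasureTheory

/-- Mean squared error between two length-`H` trajectories in `ℝⁿ`. -/
noncomputable def mse {n H : ℕ} (a b : Fin H → EuclideanSpace ℝ (Fin n)) : ℝ :=
  (1 / H : ℝ) * ∑ i, ‖a i - b i‖ ^ 2

/-- Weights `λ_m(x) = (‖x − y₀^m‖₂²)⁻¹ / Σ_{m'} (‖x − y₀^{m'}‖₂²)⁻¹`. -/
noncomputable def lam {n M : ℕ} (y0 : Fin M → EuclideanSpace ℝ (Fin n))
    (x : EuclideanSpace ℝ (Fin n)) (m : Fin M) : ℝ :=
  (‖x - y0 m‖ ^ 2)⁻¹ / ∑ m', (‖x - y0 m'‖ ^ 2)⁻¹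

/-- **Corollary 1.** Under the setup of Theorem 1, for any probability
measure `μ` concentrated on the multi-focal ellipse region `Y₀`, if the loss
`L(x) = Σ_m λ_m(x) ℓ(ŷ(x), y^m)` is `μ`-integrable, then the true (expected) loss
satisfies `∫ L dμ ≤ max_m ℓ(ŷ^m, y^m) + α² R² (e^{−2γ} − 1)/(H M (e^{−2γ/H} − 1))`. -/
theorem true_loss_upper_bound {n : ℕ} (H M : ℕ) (hH : 0 < H) (hM : 0 < M)
    (α γ R : ℝ) (hα : 0 < α) (hγ : 0 < γ) (hR : 0 < R)
    (y : Fin M → Fin H → EuclideanSpace ℝ (Fin n))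
    (y0 : Fin M → EuclideanSpace ℝ (Fin n))
    (hy0 : ∀ m, y0 m = y m ⟨0, hH⟩)
    (rollout : EuclideanSpace ℝ (Fin n) → Fin H → EuclideanSpace ℝ (Fin n))
    (hcontr : ∀ x x' : EuclideanSpace ℝ (Fin n), ∀ i : Fin H,
      ‖rollout x i - rollout x' i‖ ≤ α * Real.exp (-γ * (i : ℕ) / H) * ‖x - x'‖)
    (Y0 : Set (EuclideanSpace ℝ (Fin n)))
    (hY0 : Y0 = {x | (∑ m, ‖x - y0 m‖) ≤ R ∧ ∀ m, x ≠ y0 m})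
    (htri : ∀ x ∈ Y0, ∀ m : Fin M,
      mse (rollout x) (y m) ≤
        mse (rollout x) (rollout (y0 m)) + mse (rollout (y0 m)) (y m))
    (μ : Measure (EuclideanSpace ℝ (Fin n))) [IsProbabilityMeasure μ]
    (hμ : μ Y0 = 1)
    (L : EuclideanSpace ℝ (Fin n) → ℝ)
    (hL : L = fun x => ∑ m, lam y0 x m * mse (rollout x) (y m))
    (hint : Integrable L μ) :
    ∫ x, L x ∂μ ≤
      (⨆ m : Fin M, mse (rollout (y0 m)) (y m)) +
        α ^ 2 * R ^ 2 * (Real.exp (-2 * γ) - 1) /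
          (H * M * (Real.exp (-2 * γ / H) - 1)) := by
  haveI : Nonempty (Fin M) := ⟨⟨0, hM⟩⟩
  have hHpos : (0 : ℝ) < H := by exact_mod_cast hH
  have hMpos : (0 : ℝ) < M := by exact_mod_cast hM
  set r : ℝ := Real.exp (-2 * γ / H) with hr
  have hr1 : r < 1 := by
    rw [hr, Real.exp_lt_one_iff]
    exact div_neg_of_neg_of_pos (by linarith) hHpos
  have hrne : r - 1 ≠ 0 := by linarith
  set G : ℝ := ∑ i : Fin H, Real.exp (-2 * γ * i / H) with hG
  have hGnonneg : 0 ≤ G := Finset.sum_nonneg fun i _ => (Real.exp_pos _).le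
  have hGeq : G = (Real.exp (-2 * γ) - 1) / (r - 1) := by
    have hterm : ∀ i : Fin H, Real.exp (-2 * γ * i / H) = r ^ (i : ℕ) := by
      intro i
      rw [hr, ← Real.exp_nat_mul]
      congr 1; ring
    rw [hG]
    simp_rw [hterm]
    rw [Fin.sum_univ_eq_sum_range, geom_sum_eq (by intro h; rw [h] at hr1; linarith)]
    congr 1
    rw [hr, ← Real.exp_nat_mul]
    congr 1
    field_simp
  set C : ℝ := (⨆ m : Fin M, mse (rollout (y0 m)) (y m)) +
      α ^ 2 * R ^ 2 * (Real.exp (-2 * γ) - 1) /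
        (H * M * (r - 1)) with hC
  have hC2 : α ^ 2 * R ^ 2 * (Real.exp (-2 * γ) - 1) / (H * M * (r - 1))
      = α ^ 2 * R ^ 2 * G / (H * M) := by
    rw [hGeq, ← mul_div_assoc, div_div]
    congr 1
    ring
  -- pointwise bound on Y0
  have key : ∀ x ∈ Y0, L x ≤ C := by
    intro x hx
    have hx' := hx
    rw [hY0] at hx'
    obtain ⟨hxR, hxne⟩ := hx'
    have ha : ∀ m, 0 < ‖x - y0 m‖ ^ 2 := by
      intro m
      have h0 : 0 < ‖x - y0 m‖ := norm_pos_iff.mpr (sub_ne_zero.mpr (hxne m))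
      positivity
    set S : ℝ := ∑ m', (‖x - y0 m'‖ ^ 2)⁻¹ with hS
    have hSpos : 0 < S :=
      Finset.sum_pos (fun m _ => inv_pos.mpr (ha m)) ⟨⟨0, hM⟩, Finset.mem_univ _⟩
    have hlam_nonneg : ∀ m, 0 ≤ lam y0 x m := by
      intro m
      unfold lam
      positivity
    have hlam_sum : ∑ m, lam y0 x m = 1 := by
      unfold lam
      rw [← Finset.sum_div, ← hS]
      field_simp
    -- second sum ≤ sup
    have hsup : ∑ m, lam y0 x m * mse (rollout (y0 m)) (y m)
        ≤ ⨆ m : Fin M, mse (rollout (y0 m)) (y m) := by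
      calc ∑ m, lam y0 x m * mse (rollout (y0 m)) (y m)
          ≤ ∑ m, lam y0 x m * (⨆ m' : Fin M, mse (rollout (y0 m')) (y m')) := by
            apply Finset.sum_le_sum
            intro m _
            exact mul_le_mul_of_nonneg_left
              (le_ciSup (f := fun m' : Fin M => mse (rollout (y0 m')) (y m'))
                (Set.Finite.bddAbove (Set.finite_range _)) m) (hlam_nonneg m)
        _ = ⨆ m' : Fin M, mse (rollout (y0 m')) (y m') := by
            rw [← Finset.sum_mul, hlam_sum, one_mul]
    -- first sum bound
    have hmse1 : ∀ m : Fin M, mse (rollout x) (rollout (y0 m))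
        ≤ α ^ 2 / H * G * ‖x - y0 m‖ ^ 2 := by
      intro m
      unfold mse
      have hterm : ∀ i : Fin H, ‖rollout x i - rollout (y0 m) i‖ ^ 2
          ≤ α ^ 2 * Real.exp (-2 * γ * i / H) * ‖x - y0 m‖ ^ 2 := by
        intro i
        have h1 := hcontr x (y0 m) i
        have h2 : ‖rollout x i - rollout (y0 m) i‖ ^ 2
            ≤ (α * Real.exp (-γ * (i : ℕ) / H) * ‖x - y0 m‖) ^ 2 :=
          pow_le_pow_left₀ (norm_nonneg _) h1 2
        have h3 : Real.exp (-γ * (i : ℕ) / H) ^ 2 = Real.exp (-2 * γ * i / H) := by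
          rw [← Real.exp_nat_mul]
          congr 1; push_cast; ring
        calc ‖rollout x i - rollout (y0 m) i‖ ^ 2
            ≤ (α * Real.exp (-γ * (i : ℕ) / H) * ‖x - y0 m‖) ^ 2 := h2
          _ = α ^ 2 * Real.exp (-2 * γ * i / H) * ‖x - y0 m‖ ^ 2 := by
              rw [mul_pow, mul_pow, h3]
      calc (1 / H : ℝ) * ∑ i, ‖rollout x i - rollout (y0 m) i‖ ^ 2
          ≤ (1 / H : ℝ) * ∑ i : Fin H,
              α ^ 2 * Real.exp (-2 * γ * (i : ℕ) / H) * ‖x - y0 m‖ ^ 2 := by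
            apply mul_le_mul_of_nonneg_left (Finset.sum_le_sum fun i _ => hterm i)
            positivity
        _ = α ^ 2 / H * G * ‖x - y0 m‖ ^ 2 := by
            rw [Finset.mul_sum]
            have heq : ∀ i : Fin H,
                (1 / (H : ℝ)) * (α ^ 2 * Real.exp (-2 * γ * (i : ℕ) / H) * ‖x - y0 m‖ ^ 2)
                = Real.exp (-2 * γ * (i : ℕ) / H) * (α ^ 2 / H * ‖x - y0 m‖ ^ 2) := by
              intro i; ring
            simp_rw [heq]
            rw [← Finset.sum_mul, ← hG]
            ring
    have hprod : ∀ m : Fin M, lam y0 x m * ‖x - y0 m‖ ^ 2 = 1 / S := by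
      intro m
      unfold lam
      rw [← hS, div_mul_eq_mul_div, inv_mul_cancel₀ (ha m).ne']
    -- Cauchy-Schwarz: M^2 ≤ T * S
    have hT : ∑ m, ‖x - y0 m‖ ^ 2 ≤ R ^ 2 := by
      calc ∑ m, ‖x - y0 m‖ ^ 2 ≤ (∑ m, ‖x - y0 m‖) ^ 2 :=
            Finset.sum_sq_le_sq_sum_of_nonneg fun m _ => norm_nonneg _
        _ ≤ R ^ 2 := by
            apply pow_le_pow_left₀ (Finset.sum_nonneg fun m _ => norm_nonneg _) hxR
    have hCS : (M : ℝ) ^ 2 ≤ (∑ m, ‖x - y0 m‖ ^ 2) * S := by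
      have := Finset.sum_mul_sq_le_sq_mul_sq Finset.univ
        (fun m : Fin M => ‖x - y0 m‖) (fun m : Fin M => ‖x - y0 m‖⁻¹)
      have h1 : ∀ m : Fin M, ‖x - y0 m‖ * ‖x - y0 m‖⁻¹ = 1 := by
        intro m
        have : ‖x - y0 m‖ ≠ 0 := by
          intro h; have := ha m; rw [h] at this; simp at this
        field_simp
      have h2 : ∀ m : Fin M, ‖x - y0 m‖⁻¹ ^ 2 = (‖x - y0 m‖ ^ 2)⁻¹ := by
        intro m; rw [inv_pow]
      simp_rw [h1, h2] at this
      simpa [hS] using this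
    have hMS : (M : ℝ) / S ≤ R ^ 2 / M := by
      rw [div_le_div_iff₀ hSpos hMpos]
      nlinarith [hSpos.le]
    have hfirst : ∑ m, lam y0 x m * mse (rollout x) (rollout (y0 m))
        ≤ α ^ 2 * R ^ 2 * G / (H * M) := by
      calc ∑ m, lam y0 x m * mse (rollout x) (rollout (y0 m))
          ≤ ∑ m, lam y0 x m * (α ^ 2 / H * G * ‖x - y0 m‖ ^ 2) := by
            apply Finset.sum_le_sum
            intro m _
            exact mul_le_mul_of_nonneg_left (hmse1 m) (hlam_nonneg m)
        _ = α ^ 2 / H * G * ((M : ℝ) / S) := by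
            have : ∀ m : Fin M, lam y0 x m * (α ^ 2 / H * G * ‖x - y0 m‖ ^ 2)
                = α ^ 2 / H * G * (lam y0 x m * ‖x - y0 m‖ ^ 2) := fun m => by ring
            simp_rw [this, hprod]
            rw [Finset.sum_const, Finset.card_univ, Fintype.card_fin, nsmul_eq_mul]
            ring
        _ ≤ α ^ 2 / H * G * (R ^ 2 / M) := by
            apply mul_le_mul_of_nonneg_left hMS
            positivity
        _ = α ^ 2 * R ^ 2 * G / (H * M) := by ring
    rw [hL]
    calc ∑ m, lam y0 x m * mse (rollout x) (y m)
        ≤ ∑ m, lam y0 x m * (mse (rollout x) (rollout (y0 m)) + mse (rollout (y0 m)) (y m)) := by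
          apply Finset.sum_le_sum
          intro m _
          exact mul_le_mul_of_nonneg_left (htri x hx m) (hlam_nonneg m)
      _ = ∑ m, lam y0 x m * mse (rollout x) (rollout (y0 m))
            + ∑ m, lam y0 x m * mse (rollout (y0 m)) (y m) := by
          rw [← Finset.sum_add_distrib]
          apply Finset.sum_congr rfl
          intro m _; ring
      _ ≤ α ^ 2 * R ^ 2 * G / (H * M) + (⨆ m : Fin M, mse (rollout (y0 m)) (y m)) :=
          add_le_add hfirst hsup
      _ = C := by rw [hC, hC2]; ring
  -- measurability of Y0
  have hY0meas : MeasurableSet Y0 := by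
    rw [hY0]
    have hset : {x : EuclideanSpace ℝ (Fin n) | (∑ m, ‖x - y0 m‖) ≤ R ∧ ∀ m, x ≠ y0 m}
        = {x | (∑ m, ‖x - y0 m‖) ≤ R} ∩ ⋂ m, {y0 m}ᶜ := by
      ext x
      simp [Set.mem_iInter]
    rw [hset]
    apply MeasurableSet.inter
    · apply measurableSet_le _ measurable_const
      apply Continuous.measurable
      apply continuous_finset_sum
      intro m _
      exact (continuous_id.sub continuous_const).norm
    · exact MeasurableSet.iInter fun m => (measurableSet_singleton _).compl
  have hcompl : μ Y0ᶜ = 0 := (prob_compl_eq_zero_iff hY0meas).mpr hμ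
  have hae : ∀ᵐ x ∂μ, L x ≤ C := by
    have hmem : ∀ᵐ x ∂μ, x ∈ Y0 := by
      rw [MeasureTheory.ae_iff]
      exact hcompl
    filter_upwards [hmem] with x hx using key x hx
  calc ∫ x, L x ∂μ ≤ ∫ _, C ∂μ := integral_mono_ae hint (integrable_const C) hae
    _ = C := by simp
    _ = _ := by rw [hC]
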